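/- Let n ≥ 8 be even and let G_n be the graph obtained from a cycle D: v_1 v_2 … v_n v_1 of order n by adding the edges v_2 v_{n/2}, v_{(n+4)/2} v_n, and v_i v_{n+2-i} for i = 2, 3, …, n/2. Then G_n is connected of order n and size 3n/2 + 1, and G_n has exactly two minimum vertex cuts, namely {v_2, v_n} and {v_{n/2}, v_{(n+4)/2}}, each of which induces an edge; hence G_n has no independent minimum vertex cut. -/

import Mathlib

open SimpleGraph

/-- `S` is a vertex cut of `G`: a proper subset of the vertex set whose removal
disconnects the graph. -/
def IsVertexCut {V : Type*} [Fintype V] (G : SimpleGraph V) (S : Finset V) : Prop :=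
  (S : Set V) ≠ Set.univ ∧ ¬ (G.induce ((S : Set V)ᶜ)).Connected

/-- The connectivity `κ(G)`: the minimum cardinality of a vertex cut of `G`. -/
noncomputable def graphConnectivity {V : Type*} [Fintype V] (G : SimpleGraph V) : ℕ :=
  sInf {k | ∃ S : Finset V, IsVertexCut G S ∧ S.card = k}


namespace GnAux

def R (n x y : ℕ) : Prop :=
  (y = x + 1 ∨ (x = n - 1 ∧ y = 0)) ∨ (x = 1 ∧ y = n / 2 - 1) ∨
  (x = n / 2 + 1 ∧ y = n - 1) ∨ (1 ≤ x ∧ x ≤ n / 2 - 1 ∧ y = n - x)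

lemma succ_mod_eq (n x : ℕ) (hx : x < n) : (x + 1) % n = if x + 1 = n then 0 else x + 1 := by
  split
  · simp [*]
  · exact Nat.mod_eq_of_lt (by omega)

lemma mod_two_cases (n x : ℕ) (h : x < 2 * n) :
    x % n = if x < n then x else x - n := by
  split
  · exact Nat.mod_eq_of_lt (by omega)
  · rw [Nat.mod_eq_sub_mod (by omega)]
    exact Nat.mod_eq_of_lt (by omega)

variable {n : ℕ} {G : SimpleGraph (Fin n)}

def HAdj (n : ℕ) (G : SimpleGraph (Fin n)) : Prop :=
  ∀ a b : Fin n, G.Adj a b ↔ (a.1 ≠ b.1 ∧ (R n a.1 b.1 ∨ R n b.1 a.1))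

lemma hadj_of_eq (h8 : 8 ≤ n)
    (hG : G = SimpleGraph.fromRel (fun a b =>
        (b.val = (a.val + 1) % n) ∨
        (a.val = 1 ∧ b.val = n / 2 - 1) ∨
        (a.val = n / 2 + 1 ∧ b.val = n - 1) ∨
        (1 ≤ a.val ∧ a.val ≤ n / 2 - 1 ∧ b.val = n - a.val))) : HAdj n G := by
  have key : ∀ a b : Fin n, (b.1 = (a.1 + 1) % n) ↔
      (b.1 = a.1 + 1 ∨ (a.1 = n - 1 ∧ b.1 = 0)) := by
    intro a b
    have ha := a.2; have hb := b.2
    rw [succ_mod_eq n a.1 ha]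
    split_ifs <;> omega
  subst hG
  intro a b
  rw [SimpleGraph.fromRel_adj]
  apply and_congr
  · rw [Ne, Ne, Fin.ext_iff]
  · unfold R
    exact or_congr (or_congr (key a b) Iff.rfl) (or_congr (key b a) Iff.rfl)
lemma reach_chain (h8 : 8 ≤ n) (hadj : HAdj n G) {T : Set (Fin n)} :
    ∀ (k a : ℕ), a < n →
      (∀ j, j ≤ k → ∀ (h : (a + j) % n < n), (⟨(a + j) % n, h⟩ : Fin n) ∈ T) →
      ∀ (x y : ↥T), (x : Fin n).1 = a → (y : Fin n).1 = (a + k) % n →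
      (G.induce T).Reachable x y := by
  intro k
  induction k with
  | zero =>
    intro a ha hm x y hx hy
    have hxy : x = y := by
      apply Subtype.ext; apply Fin.ext
      rw [hx, hy]; simp [Nat.mod_eq_of_lt ha]
    rw [hxy]
  | succ k ih =>
    intro a ha hm x y hx hy
    have hmlt : (a + k) % n < n := Nat.mod_lt _ (by omega)
    have hmT : (⟨(a + k) % n, hmlt⟩ : Fin n) ∈ T := hm k (Nat.le_succ k) hmlt
    have r1 : (G.induce T).Reachable x ⟨⟨(a + k) % n, hmlt⟩, hmT⟩ :=
      ih a ha (fun j hj h => hm j (hj.trans (Nat.le_succ k)) h) x _ hx rfl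
    apply r1.trans
    apply SimpleGraph.Adj.reachable
    have hadj2 : G.Adj ⟨(a + k) % n, hmlt⟩ (y : Fin n) := by
      rw [hadj]
      have e : (a + (k + 1)) % n = ((a + k) % n + 1) % n := by
        rw [Nat.mod_add_mod, ← Nat.add_assoc]
      have e2 := succ_mod_eq n ((a + k) % n) hmlt
      rw [e2] at e
      refine ⟨?_, Or.inl ?_⟩
      · show (a + k) % n ≠ (y : Fin n).1
        rw [hy, e]; split_ifs <;> omega
      · show R n ((a + k) % n) (y : Fin n).1
        unfold R; left; rw [hy, e]
        split_ifs <;> omega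
    exact SimpleGraph.comap_adj.mpr hadj2

/-- reachability within an interval (lo, hi), no wraparound -/
lemma reach_up (h8 : 8 ≤ n) (hadj : HAdj n G) {T : Set (Fin n)} (lo hi : ℕ) (hhi : hi < n)
    (hT : ∀ t : Fin n, lo < t.1 → t.1 < hi → t ∈ T)
    (x y : ↥T) (hx : lo < (x : Fin n).1 ∧ (x : Fin n).1 < hi)
    (hy : lo < (y : Fin n).1 ∧ (y : Fin n).1 < hi) :
    (G.induce T).Reachable x y := by
  have key : ∀ (x y : ↥T), lo < (x : Fin n).1 → (x : Fin n).1 < hi →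
      lo < (y : Fin n).1 → (y : Fin n).1 < hi → (x : Fin n).1 ≤ (y : Fin n).1 →
      (G.induce T).Reachable x y := by
    intro x y hx1 hx2 hy1 hy2 hle
    refine reach_chain h8 hadj ((y : Fin n).1 - (x : Fin n).1) (x : Fin n).1
      (by omega) ?_ x y rfl ?_
    · intro j hj h
      apply hT
      · simp only
        rw [Nat.mod_eq_of_lt (by omega)]; omega
      · simp only
        rw [Nat.mod_eq_of_lt (by omega)]; omega
    · rw [Nat.mod_eq_of_lt (by omega)]; omega
  rcases le_total (x : Fin n).1 (y : Fin n).1 with h | h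
  · exact key x y hx.1 hx.2 hy.1 hy.2 h
  · exact (key y x hy.1 hy.2 hx.1 hx.2 h).symm

/-- reachability within the "outer" arc {t | t < m ∨ k < t} (wrapping around 0) -/
lemma reach_cyc (h8 : 8 ≤ n) (hadj : HAdj n G) {T : Set (Fin n)} (m k : ℕ)
    (hmk : m ≤ k) (hk : k < n)
    (hT : ∀ t : Fin n, (t.1 < m ∨ k < t.1) → t ∈ T)
    (x y : ↥T) (hx : (x : Fin n).1 < m ∨ k < (x : Fin n).1)
    (hy : (y : Fin n).1 < m ∨ k < (y : Fin n).1) :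
    (G.induce T).Reachable x y := by
  set D : ℕ → ℕ := fun v => if v > k then v - k - 1 else v + n - k - 1 with hD
  have key : ∀ (x y : ↥T), ((x : Fin n).1 < m ∨ k < (x : Fin n).1) →
      ((y : Fin n).1 < m ∨ k < (y : Fin n).1) → D (x : Fin n).1 ≤ D (y : Fin n).1 →
      (G.induce T).Reachable x y := by
    intro x y hx hy hle
    have hxn := (x : Fin n).2
    have hyn := (y : Fin n).2
    have hDx : D (x : Fin n).1 = if (x : Fin n).1 > k then (x : Fin n).1 - k - 1
        else (x : Fin n).1 + n - k - 1 := rfl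
    have hDy : D (y : Fin n).1 = if (y : Fin n).1 > k then (y : Fin n).1 - k - 1
        else (y : Fin n).1 + n - k - 1 := rfl
    set P := (x : Fin n).1
    set Q := (y : Fin n).1
    refine reach_chain h8 hadj (D Q - D P) P (by omega) ?_ x y rfl ?_
    · intro j hj h
      apply hT
      simp only
      rw [mod_two_cases n (P + j) (by split_ifs at hDx hDy <;> omega)]
      split_ifs at hDx hDy ⊢ <;> omega
    · rw [mod_two_cases n (P + (D Q - D P)) (by split_ifs at hDx hDy <;> omega)]
      split_ifs at hDx hDy ⊢ <;> omega
  rcases le_total (D (x : Fin n).1) (D (y : Fin n).1) with h | h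
  · exact key x y hx hy h
  · exact (key y x hy hx h).symm
lemma mem_compl_pair (x y t : Fin n) (h1 : t.1 ≠ x.1) (h2 : t.1 ≠ y.1) :
    t ∈ (↑({x, y} : Finset (Fin n)) : Set (Fin n))ᶜ := by
  simp only [Finset.coe_insert, Finset.coe_singleton, Set.mem_compl_iff, Set.mem_insert_iff,
    Set.mem_singleton_iff]
  rintro (rfl | rfl) <;> omega

lemma of_mem_compl_pair (x y t : Fin n)
    (ht : t ∈ (↑({x, y} : Finset (Fin n)) : Set (Fin n))ᶜ) : t.1 ≠ x.1 ∧ t.1 ≠ y.1 := by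
  simp only [Finset.coe_insert, Finset.coe_singleton, Set.mem_compl_iff, Set.mem_insert_iff,
    Set.mem_singleton_iff] at ht
  push_neg at ht
  exact ⟨fun h => ht.1 (Fin.ext h), fun h => ht.2 (Fin.ext h)⟩

lemma conn_pair_compl (h8 : 8 ≤ n) (hadj : HAdj n G) (x y : Fin n)
    (hlt : x.1 < y.1) (hne1 : ¬(x.1 = 1 ∧ y.1 = n - 1))
    (hne2 : ¬(x.1 = n / 2 - 1 ∧ y.1 = n / 2 + 1)) :
    (G.induce (↑({x, y} : Finset (Fin n)) : Set (Fin n))ᶜ).Connected := by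
  set T := (↑({x, y} : Finset (Fin n)) : Set (Fin n))ᶜ with hTdef
  have hmem : ∀ t : Fin n, t.1 ≠ x.1 → t.1 ≠ y.1 → t ∈ T := fun t h1 h2 =>
    mem_compl_pair x y t h1 h2
  have hmem' : ∀ t : Fin n, t ∈ T → t.1 ≠ x.1 ∧ t.1 ≠ y.1 := fun t ht =>
    of_mem_compl_pair x y t ht
  have hkn : y.1 < n := y.2
  rw [connected_iff]
  by_cases hA : y.1 = x.1 + 1
  · -- inner arc empty
    have hw : (⟨if x.1 = 0 then 2 else 0, by split_ifs <;> omega⟩ : Fin n) ∈ T := by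
      apply hmem <;> (show (if x.1 = 0 then 2 else 0) ≠ _) <;> (split_ifs <;> omega)
    constructor
    · intro p q
      apply reach_cyc h8 hadj x.1 y.1 (by omega) hkn
        (fun t ht => hmem t (by omega) (by omega)) p q
      · have := hmem' _ p.2; have := (p : Fin n).2; omega
      · have := hmem' _ q.2; have := (q : Fin n).2; omega
    · exact ⟨⟨_, hw⟩⟩
  by_cases hB : x.1 = 0 ∧ y.1 = n - 1
  · -- outer arc empty
    have hw : (⟨1, by linarith⟩ : Fin n) ∈ T :=
      hmem _ (show (1 : ℕ) ≠ x.1 by omega) (show (1 : ℕ) ≠ y.1 by omega)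
    constructor
    · intro p q
      apply reach_up h8 hadj x.1 y.1 hkn (fun t h1 h2 => hmem t (by omega) (by omega)) p q
      · have := hmem' _ p.2; have := (p : Fin n).2; exact ⟨by omega, by omega⟩
      · have := hmem' _ q.2; have := (q : Fin n).2; exact ⟨by omega, by omega⟩
    · exact ⟨⟨_, hw⟩⟩
  · -- main case: both arcs nonempty, find a crossing edge
    obtain ⟨U, W, hUA, hWB, hWn, hUWne, hUWR⟩ :
        ∃ U W : ℕ, (x.1 < U ∧ U < y.1) ∧ (W < x.1 ∨ y.1 < W) ∧ W < n ∧ U ≠ W ∧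
          (R n U W ∨ R n W U) := by
      by_cases c1 : x.1 + 1 ≤ n / 2 - 1 ∧ x.1 + y.1 ≤ n - 2
      · exact ⟨x.1 + 1, n - x.1 - 1, by omega, by omega, by omega, by omega,
          by unfold R; omega⟩
      by_cases c2 : n / 2 + 2 ≤ y.1 ∧ n + 2 ≤ x.1 + y.1
      · exact ⟨y.1 - 1, n - y.1 + 1, by omega, by omega, by omega, by omega,
          by unfold R; omega⟩
      by_cases e1c : 1 < x.1 ∧ x.1 < n / 2 - 1 ∧ n / 2 - 1 < y.1
      · exact ⟨n / 2 - 1, 1, by omega, by omega, by omega, by omega, by unfold R; omega⟩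
      by_cases e2c : x.1 < n / 2 + 1 ∧ n / 2 + 1 < y.1 ∧ y.1 < n - 1
      · exact ⟨n / 2 + 1, n - 1, by omega, by omega, by omega, by omega, by unfold R; omega⟩
      · exfalso; omega
    have hu : (⟨U, by omega⟩ : Fin n) ∈ T :=
      hmem _ (show U ≠ x.1 by omega) (show U ≠ y.1 by omega)
    have hwm : (⟨W, by omega⟩ : Fin n) ∈ T :=
      hmem _ (show W ≠ x.1 by omega) (show W ≠ y.1 by omega)
    set u : ↥T := ⟨⟨U, by omega⟩, hu⟩ with hu_def
    set w : ↥T := ⟨⟨W, by omega⟩, hwm⟩ with hw_def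
    have hadjUW : (G.induce T).Adj u w := by
      apply SimpleGraph.comap_adj.mpr
      exact (hadj _ _).mpr ⟨hUWne, hUWR⟩
    have hbase : ∀ p : ↥T, (G.induce T).Reachable p u := by
      intro p
      have hp := hmem' _ p.2
      have hpn := (p : Fin n).2
      by_cases hpa : x.1 < (p : Fin n).1 ∧ (p : Fin n).1 < y.1
      · exact reach_up h8 hadj x.1 y.1 hkn (fun t h1 h2 => hmem t (by omega) (by omega))
          p u hpa ⟨by show x.1 < U; omega, by show U < y.1; omega⟩
      · have hpb : (p : Fin n).1 < x.1 ∨ y.1 < (p : Fin n).1 := by omega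
        refine (reach_cyc h8 hadj x.1 y.1 (by omega) hkn
          (fun t ht => hmem t (by omega) (by omega)) p w hpb ?_).trans
          hadjUW.symm.reachable
        show W < x.1 ∨ y.1 < W
        omega
    exact ⟨fun p q => (hbase p).trans (hbase q).symm, ⟨u⟩⟩

lemma conn_single_compl (h8 : 8 ≤ n) (hadj : HAdj n G) (x : Fin n) :
    (G.induce (↑({x} : Finset (Fin n)) : Set (Fin n))ᶜ).Connected := by
  set T := (↑({x} : Finset (Fin n)) : Set (Fin n))ᶜ with hTdef
  have hmem : ∀ t : Fin n, t.1 ≠ x.1 → t ∈ T := by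
    intro t h
    simp only [T, Finset.coe_singleton, Set.mem_compl_iff, Set.mem_singleton_iff]
    intro hc; exact h (congrArg Fin.val hc)
  have hmem' : ∀ t : Fin n, t ∈ T → t.1 ≠ x.1 := by
    intro t ht
    simp only [T, Finset.coe_singleton, Set.mem_compl_iff, Set.mem_singleton_iff] at ht
    exact fun h => ht (Fin.ext h)
  rw [connected_iff]
  constructor
  · intro p q
    apply reach_cyc h8 hadj x.1 x.1 le_rfl x.2 (fun t ht => hmem t (by omega)) p q
    · have := hmem' _ p.2; have := (p : Fin n).2; omega
    · have := hmem' _ q.2; have := (q : Fin n).2; omega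
  · refine ⟨⟨⟨if x.1 = 0 then 1 else 0, by split_ifs <;> omega⟩, hmem _ ?_⟩⟩
    show (if x.1 = 0 then 1 else 0) ≠ x.1
    split_ifs <;> omega

lemma conn_G (h8 : 8 ≤ n) (hadj : HAdj n G) : G.Connected := by
  have huniv : (G.induce (Set.univ : Set (Fin n))).Connected := by
    rw [connected_iff]
    have key : ∀ p : ↥(Set.univ : Set (Fin n)),
        (G.induce (Set.univ : Set (Fin n))).Reachable ⟨⟨0, by omega⟩, Set.mem_univ _⟩ p := by
      intro p
      exact reach_chain h8 hadj (p : Fin n).1 0 (by omega) (fun j hj h => Set.mem_univ _)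
        _ p rfl (by rw [Nat.zero_add, Nat.mod_eq_of_lt (p : Fin n).2])
    exact ⟨fun p q => (key p).symm.trans (key q), ⟨⟨⟨0, by omega⟩, Set.mem_univ _⟩⟩⟩
  exact (induceUnivIso G).connected_iff.mp huniv

lemma not_conn_of_isolated {T : Set (Fin n)} (v w : Fin n) (hv : v ∈ T) (hw : w ∈ T)
    (hvw : v ≠ w) (hiso : ∀ z : Fin n, z ∈ T → ¬ G.Adj v z) :
    ¬ (G.induce T).Connected := by
  intro hc
  obtain ⟨p⟩ := hc.preconnected ⟨v, hv⟩ ⟨w, hw⟩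
  cases p with
  | nil => exact hvw (by simpa using congrArg Subtype.val (rfl : (⟨v, hv⟩ : ↥T) = ⟨v, hv⟩))
  | cons h q => exact hiso _ (Subtype.prop _) (SimpleGraph.comap_adj.mp h)
lemma edge_count (h8 : 8 ≤ n) (h2 : n % 2 = 0) (hadj : HAdj n G) :
    G.edgeSet.ncard = 3 * n / 2 + 1 := by
  classical
  set f1 : Fin n → Sym2 (Fin n) :=
    fun i => s(i, ⟨(i.1 + 1) % n, Nat.mod_lt _ (by omega)⟩) with hf1
  set f2 : {a // a ∈ Finset.Ico 1 (n / 2)} → Sym2 (Fin n) :=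
    fun a => s(⟨a.1, by have := a.2; rw [Finset.mem_Ico] at this; omega⟩,
               ⟨n - a.1, by have := a.2; rw [Finset.mem_Ico] at this; omega⟩) with hf2
  set e1 : Sym2 (Fin n) := s(⟨1, by linarith⟩, ⟨n / 2 - 1, by omega⟩) with he1
  set e2 : Sym2 (Fin n) := s(⟨n / 2 + 1, by omega⟩, ⟨n - 1, Nat.sub_lt (by linarith) Nat.one_pos⟩) with he2
  set F : Finset (Sym2 (Fin n)) :=
    Finset.univ.image f1 ∪ ((Finset.Ico 1 (n / 2)).attach.image f2 ∪ {e1, e2}) with hF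
  have hmemF : ∀ e : Sym2 (Fin n), e ∈ F ↔
      ((∃ i : Fin n, f1 i = e) ∨ (∃ a : {a // a ∈ Finset.Ico 1 (n / 2)}, f2 a = e) ∨
        e = e1 ∨ e = e2) := by
    intro e
    simp only [hF, Finset.mem_union, Finset.mem_image, Finset.mem_univ, true_and,
      Finset.mem_insert, Finset.mem_singleton, Finset.mem_attach, or_assoc]
  -- the edge set equals F
  have hset : G.edgeSet = ↑F := by
    apply Set.eq_of_subset_of_subset
    · intro e he
      induction e with
      | _ a b =>
        rw [SimpleGraph.mem_edgeSet, hadj] at he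
        obtain ⟨hne, hr⟩ := he
        rw [Finset.mem_coe, hmemF]
        have key : ∀ u v : Fin n, u.1 ≠ v.1 → R n u.1 v.1 →
            ((∃ i : Fin n, f1 i = s(u, v)) ∨
              (∃ a : {a // a ∈ Finset.Ico 1 (n / 2)}, f2 a = s(u, v)) ∨
              s(u, v) = e1 ∨ s(u, v) = e2) := by
          intro u v hne hr
          have hun := u.2; have hvn := v.2
          unfold R at hr
          rcases hr with (h | h) | h | h | h
          · refine Or.inl ⟨u, ?_⟩
            have hm : (u.1 + 1) % n = v.1 := by rw [Nat.mod_eq_of_lt (by omega)]; omega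
            simp only [hf1]
            exact congrArg (fun z => s(u, z)) (Fin.ext hm)
          · refine Or.inl ⟨u, ?_⟩
            have hm : (u.1 + 1) % n = v.1 := by
              rw [show u.1 + 1 = n by omega, Nat.mod_self]; omega
            simp only [hf1]
            exact congrArg (fun z => s(u, z)) (Fin.ext hm)
          · refine Or.inr (Or.inr (Or.inl ?_))
            simp only [he1, Sym2.eq, Sym2.rel_iff', Prod.mk.injEq, Prod.swap_prod_mk,
              Fin.ext_iff, Fin.val_mk, true_and]
            omega
          · refine Or.inr (Or.inr (Or.inr ?_))
            simp only [he2, Sym2.eq, Sym2.rel_iff', Prod.mk.injEq, Prod.swap_prod_mk,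
              Fin.ext_iff, Fin.val_mk, true_and]
            omega
          · refine Or.inr (Or.inl ⟨⟨u.1, Finset.mem_Ico.mpr ⟨by omega, by omega⟩⟩, ?_⟩)
            simp only [hf2, Sym2.eq, Sym2.rel_iff', Prod.mk.injEq, Prod.swap_prod_mk,
              Fin.ext_iff, Fin.val_mk, true_and]
            omega
        rcases hr with hr | hr
        · exact key a b hne hr
        · have := key b a (by omega) hr
          rwa [Sym2.eq_swap] at this
    · intro e he
      rw [Finset.mem_coe, hmemF] at he
      show e ∈ G.edgeSet
      rcases he with ⟨i, hi⟩ | ⟨a, ha⟩ | rfl | rfl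
      · subst hi
        rw [SimpleGraph.mem_edgeSet, hadj]
        have hi2 := succ_mod_eq n i.1 i.2
        constructor
        · show i.1 ≠ (i.1 + 1) % n
          split_ifs at hi2 <;> omega
        · left; unfold R; left
          show (i.1 + 1) % n = i.1 + 1 ∨ (i.1 = n - 1 ∧ (i.1 + 1) % n = 0)
          split_ifs at hi2 <;> omega
      · subst ha
        have ha2 := a.2
        rw [Finset.mem_Ico] at ha2
        rw [SimpleGraph.mem_edgeSet, hadj]
        constructor
        · show a.1 ≠ n - a.1
          omega
        · left; unfold R
          refine Or.inr (Or.inr (Or.inr ?_))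
          show 1 ≤ a.1 ∧ a.1 ≤ n / 2 - 1 ∧ n - a.1 = n - a.1
          omega
      · rw [SimpleGraph.mem_edgeSet, hadj]
        exact ⟨show (1 : ℕ) ≠ n / 2 - 1 by omega,
          Or.inl (Or.inr (Or.inl ⟨rfl, rfl⟩))⟩
      · rw [SimpleGraph.mem_edgeSet, hadj]
        exact ⟨show n / 2 + 1 ≠ n - 1 by omega,
          Or.inl (Or.inr (Or.inr (Or.inl ⟨rfl, rfl⟩)))⟩
  rw [hset, Set.ncard_coe_finset]
  -- now count
  have hc1 : (Finset.univ.image f1).card = n := by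
    rw [Finset.card_image_of_injective _ ?_, Finset.card_univ, Fintype.card_fin]
    intro i j hij
    simp only [hf1, Sym2.eq, Sym2.rel_iff', Prod.mk.injEq, Prod.swap_prod_mk] at hij
    rcases hij with ⟨h1, _⟩ | ⟨h1, h2⟩
    · exact h1
    · -- i = succ j and succ i = j
      have e1' := succ_mod_eq n i.1 i.2
      have e2' := succ_mod_eq n j.1 j.2
      have h1' : i.1 = (j.1 + 1) % n := congrArg Fin.val h1
      have h2' : (i.1 + 1) % n = j.1 := congrArg Fin.val h2
      apply Fin.ext
      split_ifs at e1' e2' <;> omega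
  have hc2 : ((Finset.Ico 1 (n / 2)).attach.image f2).card = n / 2 - 1 := by
    rw [Finset.card_image_of_injective _ ?_, Finset.card_attach, Nat.card_Ico]
    intro a b hab
    have ha2 := a.2; have hb2 := b.2
    rw [Finset.mem_Ico] at ha2 hb2
    simp only [hf2, Sym2.eq, Sym2.rel_iff', Prod.mk.injEq, Prod.swap_prod_mk] at hab
    apply Subtype.ext
    rcases hab with ⟨h1, _⟩ | ⟨h1, h2⟩
    · exact congrArg Fin.val h1
    · have := congrArg Fin.val h1
      have := congrArg Fin.val h2
      simp only at *
      omega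
  have hdisj2 : Disjoint ((Finset.Ico 1 (n / 2)).attach.image f2) ({e1, e2} : Finset _) := by
    rw [Finset.disjoint_left]
    intro e hee he12
    obtain ⟨a, _, ha⟩ := Finset.mem_image.mp hee
    have ha2 := a.2; rw [Finset.mem_Ico] at ha2
    rw [Finset.mem_insert, Finset.mem_singleton] at he12
    subst ha
    rcases he12 with h | h <;>
    · simp only [hf2, he1, he2, Sym2.eq, Sym2.rel_iff', Prod.mk.injEq, Prod.swap_prod_mk,
        Fin.mk.injEq] at h
      omega
  have hdisj1 : Disjoint (Finset.univ.image f1)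
      (((Finset.Ico 1 (n / 2)).attach.image f2) ∪ {e1, e2}) := by
    rw [Finset.disjoint_left]
    intro e hee he'
    obtain ⟨i, _, hi⟩ := Finset.mem_image.mp hee
    subst hi
    have hi2 := succ_mod_eq n i.1 i.2
    rw [Finset.mem_union, Finset.mem_insert, Finset.mem_singleton] at he'
    rcases he' with h | h | h
    · obtain ⟨a, _, ha⟩ := Finset.mem_image.mp h
      have ha2 := a.2; rw [Finset.mem_Ico] at ha2
      simp only [hf1, hf2, Sym2.eq, Sym2.rel_iff', Prod.mk.injEq, Fin.mk.injEq,
        Prod.swap_prod_mk, Fin.ext_iff] at ha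
      split_ifs at hi2 <;> omega
    · simp only [hf1, he1, Sym2.eq, Sym2.rel_iff', Prod.mk.injEq, Fin.mk.injEq,
        Prod.swap_prod_mk, Fin.ext_iff] at h
      split_ifs at hi2 <;> omega
    · simp only [hf1, he2, Sym2.eq, Sym2.rel_iff', Prod.mk.injEq, Fin.mk.injEq,
        Prod.swap_prod_mk, Fin.ext_iff] at h
      split_ifs at hi2 <;> omega
  have he12ne : e1 ≠ e2 := by
    simp only [ne_eq, he1, he2, Sym2.eq, Sym2.rel_iff', Prod.mk.injEq, Fin.mk.injEq,
      Prod.swap_prod_mk, not_or]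
    omega
  rw [hF, Finset.card_union_of_disjoint hdisj1, Finset.card_union_of_disjoint hdisj2,
    hc1, hc2, Finset.card_pair he12ne]
  omega

lemma mk_ne {n : ℕ} {a b : ℕ} {ha : a < n} {hb : b < n} (h : a ≠ b) :
    (⟨a, ha⟩ : Fin n) ≠ ⟨b, hb⟩ := fun hh => h (congrArg Fin.val hh)

variable {n : ℕ} {G : SimpleGraph (Fin n)}

lemma nbr_zero (h8 : 8 ≤ n) (hadj : HAdj n G) (z : Fin n)
    (h : G.Adj ⟨0, by omega⟩ z) : z.1 = 1 ∨ z.1 = n - 1 := by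
  rw [hadj] at h
  have h' : (0 : ℕ) ≠ z.1 ∧ (R n 0 z.1 ∨ R n z.1 0) := h
  have hz := z.2
  unfold R at h'
  omega

lemma nbr_half (h8 : 8 ≤ n) (h2 : n % 2 = 0) (hadj : HAdj n G) (z : Fin n)
    (h : G.Adj ⟨n / 2, by omega⟩ z) : z.1 = n / 2 - 1 ∨ z.1 = n / 2 + 1 := by
  rw [hadj] at h
  have h' : (n / 2 : ℕ) ≠ z.1 ∧ (R n (n / 2) z.1 ∨ R n z.1 (n / 2)) := h
  have hz := z.2
  unfold R at h'
  omega

lemma isCut_S1 (h8 : 8 ≤ n) (hadj : HAdj n G) :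
    IsVertexCut G {(⟨1, by linarith⟩ : Fin n), ⟨n - 1, Nat.sub_lt (by linarith) Nat.one_pos⟩} := by
  constructor
  · intro hu
    have h0 : (⟨0, by omega⟩ : Fin n) ∈
        (↑({(⟨1, by linarith⟩ : Fin n), ⟨n - 1, Nat.sub_lt (by linarith) Nat.one_pos⟩} : Finset (Fin n)) : Set (Fin n)) := by
      rw [hu]; exact Set.mem_univ _
    simp only [Finset.coe_insert, Finset.coe_singleton, Set.mem_insert_iff,
      Set.mem_singleton_iff] at h0
    rcases h0 with h | h
    · exact (by omega : ¬((0 : ℕ) = 1)) (congrArg Fin.val h)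
    · exact (by omega : ¬((0 : ℕ) = n - 1)) (congrArg Fin.val h)
  · apply not_conn_of_isolated (⟨0, by omega⟩ : Fin n) ⟨2, by omega⟩
    · exact mem_compl_pair _ _ _ (show (0 : ℕ) ≠ 1 by omega) (show (0 : ℕ) ≠ n - 1 by omega)
    · exact mem_compl_pair _ _ _ (show (2 : ℕ) ≠ 1 by omega) (show (2 : ℕ) ≠ n - 1 by omega)
    · exact mk_ne (by omega)
    · intro z hz hA
      have h1 := nbr_zero h8 hadj z hA
      have h2 := of_mem_compl_pair _ _ _ hz
      simp only [Fin.val_mk] at h2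
      omega

lemma isCut_S2 (h8 : 8 ≤ n) (h2 : n % 2 = 0) (hadj : HAdj n G) :
    IsVertexCut G {(⟨n / 2 - 1, by omega⟩ : Fin n), ⟨n / 2 + 1, by omega⟩} := by
  constructor
  · intro hu
    have h0 : (⟨0, by omega⟩ : Fin n) ∈
        (↑({(⟨n / 2 - 1, by omega⟩ : Fin n), ⟨n / 2 + 1, by omega⟩} : Finset (Fin n)) :
          Set (Fin n)) := by
      rw [hu]; exact Set.mem_univ _
    simp only [Finset.coe_insert, Finset.coe_singleton, Set.mem_insert_iff,
      Set.mem_singleton_iff] at h0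
    rcases h0 with h | h
    · exact (by omega : ¬((0 : ℕ) = n / 2 - 1)) (congrArg Fin.val h)
    · exact (by omega : ¬((0 : ℕ) = n / 2 + 1)) (congrArg Fin.val h)
  · apply not_conn_of_isolated (⟨n / 2, by omega⟩ : Fin n) ⟨0, by omega⟩
    · exact mem_compl_pair _ _ _ (show (n / 2 : ℕ) ≠ n / 2 - 1 by omega)
        (show (n / 2 : ℕ) ≠ n / 2 + 1 by omega)
    · exact mem_compl_pair _ _ _ (show (0 : ℕ) ≠ n / 2 - 1 by omega)
        (show (0 : ℕ) ≠ n / 2 + 1 by omega)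
    · exact mk_ne (by omega)
    · intro z hz hA
      have h1 := nbr_half h8 h2 hadj z hA
      have h3 := of_mem_compl_pair _ _ _ hz
      simp only [Fin.val_mk] at h3
      omega

lemma kappa_eq (h8 : 8 ≤ n) (h2 : n % 2 = 0) (hadj : HAdj n G) :
    graphConnectivity G = 2 := by
  classical
  have h2K : 2 ∈ {k | ∃ S : Finset (Fin n), IsVertexCut G S ∧ S.card = k} :=
    ⟨{(⟨1, by linarith⟩ : Fin n), ⟨n - 1, Nat.sub_lt (by linarith) Nat.one_pos⟩}, isCut_S1 h8 hadj,
      Finset.card_pair (mk_ne (by omega))⟩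
  unfold graphConnectivity
  have hle : sInf {k | ∃ S : Finset (Fin n), IsVertexCut G S ∧ S.card = k} ≤ 2 :=
    Nat.sInf_le h2K
  obtain ⟨S, hS, hcard⟩ := Nat.sInf_mem (⟨2, h2K⟩ :
    Set.Nonempty {k | ∃ S : Finset (Fin n), IsVertexCut G S ∧ S.card = k})
  rcases Nat.lt_or_ge (sInf {k | ∃ S : Finset (Fin n), IsVertexCut G S ∧ S.card = k}) 2
    with hlt | hge
  · exfalso
    rcases (by omega : S.card = 0 ∨ S.card = 1) with h | h
    · apply hS.2
      rw [Finset.card_eq_zero.mp h, Finset.coe_empty, Set.compl_empty]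
      exact (induceUnivIso G).connected_iff.mpr (conn_G h8 hadj)
    · obtain ⟨x, rfl⟩ := Finset.card_eq_one.mp h
      exact hS.2 (conn_single_compl h8 hadj x)
  · omega

lemma cut_classify (h8 : 8 ≤ n) (h2 : n % 2 = 0) (hadj : HAdj n G)
    (v1 vn w1 w2 : Fin n) (hv1 : v1.1 = 1) (hvn : vn.1 = n - 1)
    (hw1 : w1.1 = n / 2 - 1) (hw2 : w2.1 = n / 2 + 1) (S : Finset (Fin n))
    (hS : IsVertexCut G S) (hc : S.card = 2) :
    S = {v1, vn} ∨ S = {w1, w2} := by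
  classical
  have main : ∀ x y : Fin n, x.1 < y.1 → IsVertexCut G {x, y} →
      ({x, y} : Finset (Fin n)) = {v1, vn} ∨ ({x, y} : Finset (Fin n)) = {w1, w2} := by
    intro x y hlt hcut
    by_cases c1 : x.1 = 1 ∧ y.1 = n - 1
    · left
      rw [show x = v1 from Fin.ext (by omega), show y = vn from Fin.ext (by omega)]
    · by_cases c2 : x.1 = n / 2 - 1 ∧ y.1 = n / 2 + 1
      · right
        rw [show x = w1 from Fin.ext (by omega), show y = w2 from Fin.ext (by omega)]
      · exact absurd (conn_pair_compl h8 hadj x y hlt c1 c2) hcut.2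
  obtain ⟨x, y, hxy, rfl⟩ := Finset.card_eq_two.mp hc
  rcases Nat.lt_trichotomy x.1 y.1 with h | h | h
  · exact main x y h hS
  · exact absurd (Fin.ext h) hxy
  · rw [Finset.pair_comm x y] at hS ⊢
    exact main y x h hS

end GnAux

/-- For even `n ≥ 8`, the graph `G_n` (a cycle `v_1 ⋯ v_n v_1` together with
the edges `v_2 v_{n/2}`, `v_{(n+4)/2} v_n` and `v_i v_{n+2-i}` for
`2 ≤ i ≤ n/2`; here `v_i` is the vertex `i - 1 : Fin n`) is connected, has
order `n` and size `3n/2 + 1`, its minimum vertex cuts are exactly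
`{v_2, v_n}` and `{v_{n/2}, v_{(n+4)/2}}`, each of which induces an edge, and
hence it has no independent minimum vertex cut. -/
theorem G_n_even_no_independent_minimum_vertex_cut
    (n : ℕ) (h8 : 8 ≤ n) (heven : Even n) (G : SimpleGraph (Fin n))
    (hG : G = SimpleGraph.fromRel (fun a b =>
        (b.val = (a.val + 1) % n) ∨
        (a.val = 1 ∧ b.val = n / 2 - 1) ∨
        (a.val = n / 2 + 1 ∧ b.val = n - 1) ∨
        (1 ≤ a.val ∧ a.val ≤ n / 2 - 1 ∧ b.val = n - a.val))) :
    G.Connected ∧ Fintype.card (Fin n) = n ∧ G.edgeSet.ncard = 3 * n / 2 + 1 ∧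
    (∀ S : Finset (Fin n), (IsVertexCut G S ∧ S.card = graphConnectivity G) ↔
      (S = {⟨1, by omega⟩, ⟨n - 1, by omega⟩} ∨
       S = {⟨n / 2 - 1, by omega⟩, ⟨n / 2 + 1, by omega⟩})) ∧
    G.Adj ⟨1, by omega⟩ ⟨n - 1, by omega⟩ ∧
    G.Adj ⟨n / 2 - 1, by omega⟩ ⟨n / 2 + 1, by omega⟩ ∧
    ¬ ∃ S : Finset (Fin n), IsVertexCut G S ∧ S.card = graphConnectivity G ∧
      ∀ a ∈ S, ∀ b ∈ S, ¬ G.Adj a b := by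
  classical
  have hadj : GnAux.HAdj n G := GnAux.hadj_of_eq h8 hG
  have h2 : n % 2 = 0 := Nat.even_iff.mp heven
  have hadj1 : G.Adj (⟨1, by omega⟩ : Fin n) ⟨n - 1, by omega⟩ := by
    rw [hadj]
    refine ⟨show (1 : ℕ) ≠ n - 1 by omega, Or.inl ?_⟩
    show GnAux.R n 1 (n - 1)
    unfold GnAux.R; omega
  have hadj2 : G.Adj (⟨n / 2 - 1, by omega⟩ : Fin n) ⟨n / 2 + 1, by omega⟩ := by
    rw [hadj]
    refine ⟨show (n / 2 - 1 : ℕ) ≠ n / 2 + 1 by omega, Or.inl ?_⟩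
    show GnAux.R n (n / 2 - 1) (n / 2 + 1)
    unfold GnAux.R; omega
  have hiff : ∀ S : Finset (Fin n),
      (IsVertexCut G S ∧ S.card = graphConnectivity G) ↔
      (S = {(⟨1, by omega⟩ : Fin n), ⟨n - 1, by omega⟩} ∨
       S = {(⟨n / 2 - 1, by omega⟩ : Fin n), ⟨n / 2 + 1, by omega⟩}) := by
    intro S
    rw [GnAux.kappa_eq h8 h2 hadj]
    constructor
    · rintro ⟨hcut, hcard⟩
      exact GnAux.cut_classify h8 h2 hadj _ _ _ _ rfl rfl rfl rfl S hcut hcard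
    · rintro (rfl | rfl)
      · exact ⟨GnAux.isCut_S1 h8 hadj, Finset.card_pair (GnAux.mk_ne (by omega))⟩
      · exact ⟨GnAux.isCut_S2 h8 h2 hadj, Finset.card_pair (GnAux.mk_ne (by omega))⟩
  refine ⟨GnAux.conn_G h8 hadj, Fintype.card_fin n, GnAux.edge_count h8 h2 hadj,
    hiff, hadj1, hadj2, ?_⟩
  rintro ⟨S, hcut, hcard, hind⟩
  rcases (hiff S).mp ⟨hcut, hcard⟩ with rfl | rfl
  · exact hind _ (Finset.mem_insert_self _ _) _
      (Finset.mem_insert_of_mem (Finset.mem_singleton_self _)) hadj1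
  · exact hind _ (Finset.mem_insert_self _ _) _
      (Finset.mem_insert_of_mem (Finset.mem_singleton_self _)) hadj2
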